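/- arXiv:1707.07597 — 2 statements merged into one kernel-verified Lean document; each statement's English description precedes it below -/
import Mathlib

section
/- Let α > 0 and let u, a, b be as in the Hadamard–Gronwall inequality, with a additionally nondecreasing on [1,T). If u(t) ≤ a(t) + b(t) ∫₁ᵗ (log(t/s))^{α-1} u(s) ds/s for all t ∈ [1,T), then u(t) ≤ a(t) E_α(b(t) Γ(α) (log t)^α) for all t ∈ [1,T). -/
open Real MeasureTheory Set Filter Topology

theorem realBeta (p q : ℝ) (hp : 0 < p) (hq : 0 < q) :
    ∫ z in (0:ℝ)..1, z ^ (p-1) * (1-z) ^ (q-1) = Gamma p * Gamma q / Gamma (p+q) := by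
  have hc := Complex.Gamma_mul_Gamma_eq_betaIntegral (s := (p:ℂ)) (t := (q:ℂ))
    (by simpa using hp) (by simpa using hq)
  have hbeta : Complex.betaIntegral (p:ℂ) (q:ℂ)
      = ((∫ z in (0:ℝ)..1, z ^ (p-1) * (1-z) ^ (q-1) : ℝ) : ℂ) := by
    rw [Complex.betaIntegral, ← intervalIntegral.integral_ofReal]
    apply intervalIntegral.integral_congr
    intro x hx
    rw [uIcc_of_le (by norm_num : (0:ℝ) ≤ 1)] at hx
    obtain ⟨hx0, hx1⟩ := hx
    push_cast
    rw [Complex.ofReal_cpow hx0, Complex.ofReal_cpow (by linarith : (0:ℝ) ≤ 1 - x)]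
    push_cast
    ring
  rw [hbeta, Complex.Gamma_ofReal, Complex.Gamma_ofReal, ← Complex.ofReal_add,
    Complex.Gamma_ofReal, ← Complex.ofReal_mul, ← Complex.ofReal_mul,
    Complex.ofReal_inj] at hc
  have hΓ : Gamma (p+q) ≠ 0 := (Gamma_pos_of_pos (by linarith)).ne'
  field_simp at hc ⊢
  linarith [hc]

theorem betaKernel {α p x : ℝ} (hα : 0 < α) (hp : 0 ≤ p) (hx : 0 ≤ x) :
    ∫ y in (0:ℝ)..x, (x - y) ^ (α-1) * y ^ p
      = Gamma α * Gamma (p+1) / Gamma (α+p+1) * x ^ (α+p) := by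
  rcases hx.eq_or_lt with rfl | hx'
  · rw [intervalIntegral.integral_same, Real.zero_rpow (by positivity : α + p ≠ 0), mul_zero]
  · have key : ∫ y in (0:ℝ)..x, (x - y) ^ (α-1) * y ^ p
        = x • ∫ z in (0:ℝ)..1, (x - x*z) ^ (α-1) * (x*z) ^ p := by
      rw [intervalIntegral.smul_integral_comp_mul_left
        (fun y => (x - y) ^ (α-1) * y ^ p) x, mul_zero, mul_one]
    rw [key]
    have congr1 : ∫ z in (0:ℝ)..1, (x - x*z) ^ (α-1) * (x*z) ^ p
        = ∫ z in (0:ℝ)..1, x ^ (α-1+p) * (z ^ ((p+1)-1) * (1-z) ^ (α-1)) := by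
      apply intervalIntegral.integral_congr
      intro z hz
      rw [uIcc_of_le (by norm_num : (0:ℝ) ≤ 1)] at hz
      obtain ⟨hz0, hz1⟩ := hz
      simp only []
      have h1 : x - x*z = x * (1-z) := by ring
      rw [h1, Real.mul_rpow hx (by linarith), Real.mul_rpow hx hz0,
        Real.rpow_add hx' (α-1) p]
      ring_nf
    rw [congr1, intervalIntegral.integral_const_mul, realBeta (p+1) α (by linarith) hα]
    rw [smul_eq_mul, show Gamma (p+1+α) = Gamma (α+p+1) by ring_nf,
      show α + p = 1 + (α-1+p) by ring, Real.rpow_add hx' 1 (α-1+p), Real.rpow_one]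
    ring

theorem kernInt {α x : ℝ} (hα : 0 < α) (hx : 0 ≤ x) {g : ℝ → ℝ}
    (hg : ContinuousOn g (Icc 0 x)) :
    IntervalIntegrable (fun y => (x - y) ^ (α-1) * g y) volume 0 x := by
  have h1 : IntervalIntegrable (fun y : ℝ => (x - y) ^ (α-1)) volume 0 x := by
    have := (intervalIntegral.intervalIntegrable_rpow' (a := 0) (b := x)
      (r := α - 1) (by linarith)).comp_sub_left x
    simpa using this.symm
  exact h1.mul_continuousOn (by rwa [uIcc_of_le hx])

theorem gammaRatio {α y : ℝ} (hα : 0 < α) (hy : 2 ≤ y) :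
    Gamma y * (y-1) ^ α ≤ Gamma (y+α) := by
  have h1 : (0:ℝ) < y - 1 := by linarith
  have hy0 : (0:ℝ) < y := by linarith
  have hslope := Real.convexOn_log_Gamma.slope_mono_adjacent
    (x := y - 1) (y := y) (z := y + α)
    (mem_Ioi.2 h1) (mem_Ioi.2 (by linarith)) (by linarith) (by linarith)
  have hG : Gamma y = (y-1) * Gamma (y-1) := by
    have := Real.Gamma_add_one (s := y - 1) h1.ne'
    rw [show y - 1 + 1 = y by ring] at this
    exact this
  have hGy : (0:ℝ) < Gamma y := Gamma_pos_of_pos hy0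
  have hGy1 : (0:ℝ) < Gamma (y-1) := Gamma_pos_of_pos h1
  have hnum : (Real.log ∘ Gamma) y - (Real.log ∘ Gamma) (y-1) = Real.log (y-1) := by
    simp only [Function.comp_apply]
    rw [hG, Real.log_mul h1.ne' hGy1.ne']
    ring
  rw [show y - (y-1) = 1 by ring, div_one, hnum] at hslope
  -- hslope : log (y-1) ≤ ((log ∘ Γ)(y+α) - (log ∘ Γ) y)/(y+α-y)
  rw [show y + α - y = α by ring, le_div_iff₀ hα] at hslope
  simp only [Function.comp_apply] at hslope
  have key : Real.log (Gamma y * (y-1)^α) ≤ Real.log (Gamma (y+α)) := by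
    rw [Real.log_mul hGy.ne' (by positivity : ((y:ℝ)-1)^α ≠ 0),
      Real.log_rpow h1]
    linarith
  have := Real.exp_le_exp.2 key
  rwa [Real.exp_log (by positivity), Real.exp_log (Gamma_pos_of_pos (by linarith))] at this

theorem MLsummable {α : ℝ} (hα : 0 < α) {z : ℝ} (hz : 0 ≤ z) :
    Summable (fun k : ℕ => z ^ k / Gamma (k * α + 1)) := by
  apply summable_of_ratio_norm_eventually_le (r := 1/2) (by norm_num)
  have htend : Tendsto (fun k : ℕ => ((k:ℝ) * α) ^ α) atTop atTop :=
    (tendsto_rpow_atTop hα).comp (tendsto_natCast_atTop_atTop.atTop_mul_const hα)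
  filter_upwards [htend.eventually_ge_atTop (2*z),
    tendsto_natCast_atTop_atTop.eventually_ge_atTop (1/α)] with k h2z hk1
  have hkα : (1:ℝ) ≤ (k:ℝ) * α := by
    rw [div_le_iff₀ hα] at hk1; linarith
  have hratio := gammaRatio hα (y := (k:ℝ)*α + 1) (by linarith)
  rw [show (k:ℝ)*α + 1 - 1 = (k:ℝ)*α by ring] at hratio
  have hGs : (0:ℝ) < Gamma ((k:ℝ)*α+1) := Gamma_pos_of_pos (by linarith)
  have hGb : (0:ℝ) < Gamma ((↑(k+1):ℝ)*α+1) := Gamma_pos_of_pos (by push_cast; nlinarith)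
  have hzk : (0:ℝ) ≤ z ^ k := pow_nonneg hz k
  have heq : (↑(k+1):ℝ)*α+1 = (k:ℝ)*α+1+α := by push_cast; ring
  rw [Real.norm_eq_abs, Real.norm_eq_abs, abs_of_nonneg (by positivity),
    abs_of_nonneg (by positivity), heq, div_le_iff₀ (by rw [heq] at hGb; exact hGb),
    pow_succ]
  have hchain : Gamma ((k:ℝ)*α+1) * (2*z) ≤ Gamma ((k:ℝ)*α+1+α) :=
    le_trans (by nlinarith) hratio
  rw [show (1:ℝ) / 2 * (z ^ k / Gamma (↑k * α + 1)) * Gamma (↑k*α+1+α)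
      = z^k * Gamma (↑k*α+1+α) / (2*Gamma (↑k*α+1)) by ring, le_div_iff₀ (by positivity)]
  nlinarith [mul_le_mul_of_nonneg_left hchain hzk]

theorem addGronwall {α X A0 B0 : ℝ} (hα : 0 < α) (hX : 0 ≤ X) (hA : 0 ≤ A0) (hB : 0 ≤ B0)
    {U : ℝ → ℝ} (hU : ContinuousOn U (Icc 0 X)) (hUpos : ∀ y ∈ Icc 0 X, 0 ≤ U y)
    (H : ∀ x ∈ Icc 0 X, U x ≤ A0 + B0 * ∫ y in (0:ℝ)..x, (x - y) ^ (α-1) * U y) :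
    U X ≤ A0 * ∑' k : ℕ, (B0 * Gamma α * X ^ α) ^ k / Gamma (k * α + 1) := by
  -- sup of U
  obtain ⟨y0, hy0, hy0max'⟩ := isCompact_Icc.exists_isMaxOn
    (nonempty_Icc.2 hX) hU
  have hy0max : ∀ x ∈ Icc 0 X, U x ≤ U y0 := fun x hx => hy0max' hx
  set M := U y0 with hM
  have hM0 : 0 ≤ M := hUpos y0 hy0
  set c : ℕ → ℝ := fun k => (B0 * Gamma α) ^ k / Gamma (k * α + 1) with hc
  have hΓα : 0 < Gamma α := Gamma_pos_of_pos hα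
  have hΓpos : ∀ k : ℕ, (0:ℝ) < Gamma ((k:ℝ) * α + 1) := fun k =>
    Gamma_pos_of_pos (by positivity)
  have hcpos : ∀ k, 0 ≤ c k := fun k => by
    simp only [hc]; positivity
  have claim : ∀ n : ℕ, ∀ x ∈ Icc 0 X,
      U x ≤ A0 * (∑ k ∈ Finset.range n, c k * x ^ ((k:ℝ) * α))
        + M * c n * x ^ ((n:ℝ) * α) := by
    intro n
    induction n with
    | zero =>
      intro x hx
      simp only [Finset.range_zero, Finset.sum_empty, mul_zero, Nat.cast_zero, zero_mul,
        Real.rpow_zero, mul_one, zero_add]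
      have : c 0 = 1 := by simp [hc, Real.Gamma_one]
      rw [this, mul_one]
      exact hy0max x hx
    | succ n IH =>
      intro x hx
      obtain ⟨hx0, hxX⟩ := hx
      set P : ℝ → ℝ := fun y =>
        A0 * (∑ k ∈ Finset.range n, c k * y ^ ((k:ℝ) * α)) + M * c n * y ^ ((n:ℝ) * α)
        with hP
      have hPcont : ContinuousOn P (Icc 0 x) := by
        apply Continuous.continuousOn
        apply Continuous.add
        · exact continuous_const.mul (continuous_finset_sum _ fun k _ =>
            continuous_const.mul (Real.continuous_rpow_const (by positivity)))
        · exact continuous_const.mul (Real.continuous_rpow_const (by positivity))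
      have hint1 : IntervalIntegrable (fun y => (x - y) ^ (α-1) * U y) volume 0 x :=
        kernInt hα hx0 (hU.mono (Icc_subset_Icc le_rfl hxX))
      have hint2 : IntervalIntegrable (fun y => (x - y) ^ (α-1) * P y) volume 0 x :=
        kernInt hα hx0 hPcont
      have hmono : (∫ y in (0:ℝ)..x, (x - y) ^ (α-1) * U y)
          ≤ ∫ y in (0:ℝ)..x, (x - y) ^ (α-1) * P y := by
        apply intervalIntegral.integral_mono_on hx0 hint1 hint2
        intro y hy
        have hkn : (0:ℝ) ≤ (x - y) ^ (α-1) := Real.rpow_nonneg (by linarith [hy.2]) _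
        exact mul_le_mul_of_nonneg_left (IH y ⟨hy.1, hy.2.trans hxX⟩) hkn
      -- expand the integral of kernel * P
      have hintk : ∀ p : ℝ, 0 ≤ p →
          IntervalIntegrable (fun y => (x - y) ^ (α-1) * y ^ p) volume 0 x := fun p hp =>
        kernInt hα hx0 (Real.continuous_rpow_const hp).continuousOn
      have expand : ∀ y, (x - y) ^ (α-1) * P y =
          (∑ k ∈ Finset.range n, A0 * c k * ((x - y) ^ (α-1) * y ^ ((k:ℝ) * α)))
            + M * c n * ((x - y) ^ (α-1) * y ^ ((n:ℝ) * α)) := by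
        intro y
        simp only [hP, mul_add, Finset.mul_sum]
        congr 1
        · apply Finset.sum_congr rfl; intro k _; ring
        · ring
      have hIeq : (∫ y in (0:ℝ)..x, (x - y) ^ (α-1) * P y)
          = (∑ k ∈ Finset.range n, A0 * c k *
              (Gamma α * Gamma ((k:ℝ)*α+1) / Gamma (α+(k:ℝ)*α+1) * x ^ (α+(k:ℝ)*α)))
            + M * c n *
              (Gamma α * Gamma ((n:ℝ)*α+1) / Gamma (α+(n:ℝ)*α+1) * x ^ (α+(n:ℝ)*α)) := by
        have hintsum : IntervalIntegrable (fun y =>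
            ∑ k ∈ Finset.range n, A0 * c k * ((x - y) ^ (α-1) * y ^ ((k:ℝ) * α)))
            volume 0 x := by
          have heq2 : (fun y => ∑ k ∈ Finset.range n,
                A0 * c k * ((x - y) ^ (α-1) * y ^ ((k:ℝ) * α)))
              = fun y => (x - y) ^ (α-1)
                  * (∑ k ∈ Finset.range n, A0 * c k * y ^ ((k:ℝ) * α)) := by
            funext y
            rw [Finset.mul_sum]
            apply Finset.sum_congr rfl; intro k _; ring
          rw [heq2]
          exact kernInt hα hx0 (Continuous.continuousOn (continuous_finset_sum _
            fun k _ => continuous_const.mul (Real.continuous_rpow_const (by positivity))))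
        simp only [expand]
        rw [intervalIntegral.integral_add hintsum
            ((hintk _ (by positivity)).const_mul _),
          intervalIntegral.integral_finset_sum
            (fun k _ => ((hintk _ (by positivity)).const_mul _)),
          intervalIntegral.integral_const_mul,
          betaKernel hα (by positivity) hx0]
        congr 1
        apply Finset.sum_congr rfl
        intro k _
        rw [intervalIntegral.integral_const_mul, betaKernel hα (by positivity) hx0]
      -- now put everything together
      have step : U x ≤ A0 + B0 * ∫ y in (0:ℝ)..x, (x - y) ^ (α-1) * P y := by
        refine (H x ⟨hx0, hxX⟩).trans ?_
        have := mul_le_mul_of_nonneg_left hmono hB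
        linarith
      rw [hIeq] at step
      refine step.trans (le_of_eq ?_)
      have hcsucc : ∀ k : ℕ, B0 * (c k * (Gamma α * Gamma ((k:ℝ)*α+1) / Gamma (α+(k:ℝ)*α+1)))
          = c (k+1) := by
        intro k
        have h1 : Gamma ((k:ℝ)*α+1) ≠ 0 := (hΓpos k).ne'
        have h2 : ((k+1:ℕ):ℝ) * α + 1 = α + (k:ℝ)*α + 1 := by push_cast; ring
        simp only [hc, h2, pow_succ]
        field_simp
      have hxexp : ∀ k : ℕ, x ^ (α + (k:ℝ)*α) = x ^ (((k+1:ℕ):ℝ) * α) := by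
        intro k; congr 1; push_cast; ring
      rw [Finset.sum_range_succ']
      have hc0 : c 0 * x ^ (((0:ℕ):ℝ) * α) = 1 := by
        simp [hc, Real.Gamma_one]
      have hsum_eq : (B0 * ∑ k ∈ Finset.range n, A0 * c k *
            (Gamma α * Gamma ((k:ℝ)*α+1) / Gamma (α+(k:ℝ)*α+1) * x ^ (α+(k:ℝ)*α)))
          = ∑ k ∈ Finset.range n, A0 * (c (k+1) * x ^ (((k+1:ℕ):ℝ) * α)) := by
        rw [Finset.mul_sum]
        apply Finset.sum_congr rfl
        intro k _
        rw [← hcsucc k, ← hxexp k]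
        ring
      have hlast_eq : B0 * (M * c n *
            (Gamma α * Gamma ((n:ℝ)*α+1) / Gamma (α+(n:ℝ)*α+1) * x ^ (α+(n:ℝ)*α)))
          = M * c (n+1) * x ^ (((n+1:ℕ):ℝ) * α) := by
        rw [← hcsucc n, ← hxexp n]
        ring
      rw [hc0, mul_add A0, mul_one, Finset.mul_sum, mul_add B0, hsum_eq, hlast_eq]
      ring
  -- pass to the limit
  set z := B0 * Gamma α * X ^ α with hz
  have hz0 : 0 ≤ z := by positivity
  have hsum := MLsummable hα hz0
  have hterm : ∀ k : ℕ, c k * X ^ ((k:ℝ) * α) = z ^ k / Gamma ((k:ℝ) * α + 1) := by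
    intro k
    have : X ^ ((k:ℝ) * α) = (X ^ α) ^ k := by
      rw [← Real.rpow_natCast (X ^ α) k, ← Real.rpow_mul hX]
      congr 1; ring
    simp only [hc, this, hz, mul_pow]
    ring
  have key : ∀ n : ℕ, U X ≤ A0 * (∑ k ∈ Finset.range n, z ^ k / Gamma ((k:ℝ)*α+1))
      + M * (z ^ n / Gamma ((n:ℝ)*α+1)) := by
    intro n
    have := claim n X ⟨hX, le_rfl⟩
    rw [mul_assoc M] at this
    simp only [hterm] at this
    exact this
  have h1 : Tendsto (fun n => A0 * (∑ k ∈ Finset.range n, z ^ k / Gamma ((k:ℝ)*α+1))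
      + M * (z ^ n / Gamma ((n:ℝ)*α+1))) atTop
      (𝓝 (A0 * (∑' k : ℕ, z ^ k / Gamma ((k:ℝ)*α+1)) + M * 0)) :=
    ((hsum.hasSum.tendsto_sum_nat).const_mul A0).add
      ((hsum.tendsto_atTop_zero).const_mul M)
  rw [mul_zero, add_zero] at h1
  exact ge_of_tendsto' h1 key

theorem hadamardSub (u : ℝ → ℝ) (β x : ℝ) (hx : 0 ≤ x) :
    ∫ r in (1:ℝ)..(Real.exp x), (Real.log (Real.exp x / r)) ^ β * u r / r
      = ∫ y in (0:ℝ)..x, (x - y) ^ β * u (Real.exp y) := by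
  set g : ℝ → ℝ := fun r => (Real.log (Real.exp x / r)) ^ β * u r / r with hg
  have himg : Real.exp '' Ioo 0 x = Ioo 1 (Real.exp x) := by
    ext r
    simp only [mem_image, mem_Ioo]
    constructor
    · rintro ⟨y, ⟨hy0, hyx⟩, rfl⟩
      exact ⟨by simpa using Real.exp_lt_exp.2 hy0, Real.exp_lt_exp.2 hyx⟩
    · rintro ⟨h1, h2⟩
      exact ⟨Real.log r, ⟨Real.log_pos h1, (Real.log_lt_iff_lt_exp (by linarith)).2 h2⟩,
        Real.exp_log (by linarith)⟩
  have hsub := integral_image_eq_integral_abs_deriv_smul (s := Ioo 0 x) (f := Real.exp)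
      (f' := Real.exp) measurableSet_Ioo
      (fun y _ => (Real.hasDerivAt_exp y).hasDerivWithinAt) Real.exp_injective.injOn g
  rw [himg] at hsub
  rw [intervalIntegral.integral_of_le (Real.one_le_exp hx),
    intervalIntegral.integral_of_le hx,
    MeasureTheory.integral_Ioc_eq_integral_Ioo,
    MeasureTheory.integral_Ioc_eq_integral_Ioo, hsub]
  apply MeasureTheory.setIntegral_congr_fun measurableSet_Ioo
  intro y _
  simp only [hg, smul_eq_mul]
  have h1 : Real.exp x / Real.exp y = Real.exp (x - y) := (Real.exp_sub x y).symm
  rw [h1, Real.log_exp, abs_of_pos (Real.exp_pos y)]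
  field_simp

theorem stmt_4' (α T : ℝ) (hα : 0 < α) (hT : 1 < T)
    (u a b : ℝ → ℝ)
    (hu_cont : ContinuousOn u (Ico 1 T))
    (hu_nonneg : ∀ t ∈ Ico (1:ℝ) T, 0 ≤ u t)
    (ha_nonneg : ∀ t ∈ Ico (1:ℝ) T, 0 ≤ a t)
    (hb_nonneg : ∀ t ∈ Ico (1:ℝ) T, 0 ≤ b t)
    (hb_mono : MonotoneOn b (Ico 1 T))
    (ha_mono : MonotoneOn a (Ico 1 T))
    (h : ∀ t ∈ Ico (1:ℝ) T,
      u t ≤ a t + b t * ∫ s in (1:ℝ)..t, (Real.log (t / s)) ^ (α - 1) * u s / s) :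
    ∀ t ∈ Ico (1:ℝ) T,
      u t ≤ a t * ∑' k : ℕ,
        (b t * Real.Gamma α * (Real.log t) ^ α) ^ k / Real.Gamma (k * α + 1) := by
  intro t ht
  obtain ⟨ht1, htT⟩ := ht
  have ht0 : (0:ℝ) < t := by linarith
  set X := Real.log t with hXdef
  have hX0 : 0 ≤ X := Real.log_nonneg ht1
  have hexpX : Real.exp X = t := Real.exp_log ht0
  have hmap : ∀ y ∈ Icc (0:ℝ) X, Real.exp y ∈ Ico (1:ℝ) T := by
    intro y hy
    refine ⟨Real.one_le_exp hy.1, ?_⟩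
    calc Real.exp y ≤ Real.exp X := Real.exp_le_exp.2 hy.2
    _ = t := hexpX
    _ < T := htT
  have hUcont : ContinuousOn (fun y => u (Real.exp y)) (Icc 0 X) :=
    hu_cont.comp Real.continuous_exp.continuousOn hmap
  have hUpos : ∀ y ∈ Icc (0:ℝ) X, 0 ≤ u (Real.exp y) := fun y hy =>
    hu_nonneg _ (hmap y hy)
  have hat : 0 ≤ a t := ha_nonneg t ⟨ht1, htT⟩
  have hbt : 0 ≤ b t := hb_nonneg t ⟨ht1, htT⟩
  have H : ∀ x ∈ Icc (0:ℝ) X, u (Real.exp x) ≤ a t + b t *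
      ∫ y in (0:ℝ)..x, (x - y) ^ (α - 1) * u (Real.exp y) := by
    intro x hx
    set s := Real.exp x with hsdef
    have hs : s ∈ Ico (1:ℝ) T := hmap x hx
    have hst : s ≤ t := by
      rw [← hexpX]; exact Real.exp_le_exp.2 hx.2
    have hI0 : 0 ≤ ∫ r in (1:ℝ)..s, (Real.log (s / r)) ^ (α - 1) * u r / r := by
      apply intervalIntegral.integral_nonneg hs.1
      intro r hr
      have hr1 : (1:ℝ) ≤ r := hr.1
      have hrs : r ≤ s := hr.2
      have hru : 0 ≤ u r := hu_nonneg r ⟨hr1, lt_of_le_of_lt (hrs.trans hst) htT⟩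
      have hlog : 0 ≤ Real.log (s / r) :=
        Real.log_nonneg ((one_le_div (by linarith)).2 hrs)
      positivity
    calc u s ≤ a s + b s * ∫ r in (1:ℝ)..s, (Real.log (s / r)) ^ (α - 1) * u r / r :=
        h s hs
    _ ≤ a t + b t * ∫ r in (1:ℝ)..s, (Real.log (s / r)) ^ (α - 1) * u r / r := by
        have h1 := ha_mono hs ⟨ht1, htT⟩ hst
        have h2 := mul_le_mul_of_nonneg_right (hb_mono hs ⟨ht1, htT⟩ hst) hI0
        linarith
    _ = a t + b t * ∫ y in (0:ℝ)..x, (x - y) ^ (α - 1) * u (Real.exp y) := by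
        rw [hsdef, hadamardSub u (α - 1) x hx.1]
  have := addGronwall hα hX0 hat hbt hUcont hUpos H
  rwa [hexpX] at this

theorem stmt_4 (α T : ℝ) (hα : 0 < α) (hT : 1 < T)
    (u a b : ℝ → ℝ)
    (hu_cont : ContinuousOn u (Ico 1 T)) (ha_cont : ContinuousOn a (Ico 1 T))
    (hb_cont : ContinuousOn b (Ico 1 T))
    (hu_nonneg : ∀ t ∈ Ico (1:ℝ) T, 0 ≤ u t)
    (ha_nonneg : ∀ t ∈ Ico (1:ℝ) T, 0 ≤ a t)
    (hb_nonneg : ∀ t ∈ Ico (1:ℝ) T, 0 ≤ b t)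
    (hb_bdd : BddAbove (b '' Ico 1 T))
    (hb_mono : MonotoneOn b (Ico 1 T))
    (ha_mono : MonotoneOn a (Ico 1 T))
    (h : ∀ t ∈ Ico (1:ℝ) T,
      u t ≤ a t + b t * ∫ s in (1:ℝ)..t, (Real.log (t / s)) ^ (α - 1) * u s / s) :
    ∀ t ∈ Ico (1:ℝ) T,
      u t ≤ a t * ∑' k : ℕ,
        (b t * Real.Gamma α * (Real.log t) ^ α) ^ k / Real.Gamma (k * α + 1) :=
  stmt_4' α T hα hT u a b hu_cont hu_nonneg ha_nonneg hb_nonneg hb_mono ha_mono h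
end

section
/- Let J = [1,T] with T > 1, α > 0, θ > 0, and let B = C(J, ℝⁿ) with supremum norm. Suppose I : B → B is an operator such that for all x, y ∈ B and all t ∈ J, ‖Ix(t) − Iy(t)‖ ≤ (θ/Γ(α)) ∫₁ᵗ (log(t/s))^{α−1} ‖x(s) − y(s)‖ ds/s. Then for every j ∈ ℕ, ‖I^j x(t) − I^j y(t)‖ ≤ (θ (log t)^α)^j / Γ(jα + 1) · ‖x − y‖_B for all t ∈ J. -/
open Real MeasureTheory Set

section Aux
open intervalIntegral


lemma realBeta_s6 (a b : ℝ) (ha : 0 < a) (hb : 0 < b) :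
    ∫ x in (0:ℝ)..1, x ^ (a-1) * (1-x) ^ (b-1)
      = Gamma a * Gamma b / Gamma (a+b) := by
  have hG := Complex.Gamma_mul_Gamma_eq_betaIntegral
    (s := (a:ℂ)) (t := (b:ℂ)) (by simpa using ha) (by simpa using hb)
  have hab : Complex.Gamma ((a:ℂ)+(b:ℂ)) ≠ 0 := by
    rw [← Complex.ofReal_add, Complex.Gamma_ofReal]
    exact_mod_cast (Real.Gamma_pos_of_pos (by linarith)).ne'
  have hbeta : Complex.betaIntegral a b
      = Complex.Gamma a * Complex.Gamma b / Complex.Gamma ((a:ℂ)+(b:ℂ)) := by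
    field_simp [hG]
    linear_combination -hG
  have heq : Complex.betaIntegral a b
      = ((∫ x in (0:ℝ)..1, x ^ (a-1) * (1-x) ^ (b-1) : ℝ) : ℂ) := by
    rw [Complex.betaIntegral, ← intervalIntegral.integral_ofReal]
    refine intervalIntegral.integral_congr fun x hx => ?_
    rw [Set.uIcc_of_le (by norm_num : (0:ℝ) ≤ 1)] at hx
    push_cast
    rw [Complex.ofReal_cpow hx.1, Complex.ofReal_cpow (by linarith [hx.2] : (0:ℝ) ≤ 1 - x)]
    push_cast
    ring
  have := hbeta.symm.trans heq
  rw [Complex.Gamma_ofReal, Complex.Gamma_ofReal, ← Complex.ofReal_add, Complex.Gamma_ofReal,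
    ← Complex.ofReal_mul, ← Complex.ofReal_div] at this
  exact_mod_cast this.symm


lemma scaledBeta (a b L : ℝ) (ha : 0 < a) (hb : 0 < b) (hL : 0 < L) :
    ∫ u in (0:ℝ)..L, (L - u) ^ (a-1) * u ^ (b-1)
      = Gamma a * Gamma b / Gamma (a+b) * L ^ (a+b-1) := by
  have h1 := intervalIntegral.integral_comp_mul_left
    (a := 0) (b := 1) (fun u => (L - u) ^ (a-1) * u ^ (b-1)) hL.ne'
  rw [mul_zero, mul_one] at h1
  have h2 : ∫ x in (0:ℝ)..1, (fun u => (L - u) ^ (a-1) * u ^ (b-1)) (L * x)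
      = L ^ (a-1) * L ^ (b-1) * ∫ x in (0:ℝ)..1, x ^ (b-1) * (1-x) ^ (a-1) := by
    rw [← intervalIntegral.integral_const_mul]
    refine intervalIntegral.integral_congr fun x hx => ?_
    rw [Set.uIcc_of_le (by norm_num : (0:ℝ) ≤ 1)] at hx
    have hx0 := hx.1
    have hx1 : 0 ≤ 1 - x := by linarith [hx.2]
    simp only
    rw [show L - L * x = L * (1 - x) by ring, Real.mul_rpow hL.le hx1,
      Real.mul_rpow hL.le hx0]
    ring
  beta_reduce at h1
  rw [h2, realBeta_s6 b a hb ha] at h1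
  have : (∫ u in (0:ℝ)..L, (L - u) ^ (a-1) * u ^ (b-1))
      = L * (L ^ (a-1) * L ^ (b-1) * (Gamma b * Gamma a / Gamma (b+a))) := by
    rw [h1, smul_eq_mul]; field_simp
  rw [this]
  have hpow : L * (L ^ (a-1) * L ^ (b-1)) = L ^ (a+b-1) := by
    rw [show a+b-1 = 1+(a-1)+(b-1) by ring, Real.rpow_add hL, Real.rpow_add hL,
      Real.rpow_one, mul_assoc]
  rw [add_comm b a, ← hpow]
  ring


lemma log_image (t : ℝ) (ht : 1 < t) : Real.log '' Ioo 1 t = Ioo 0 (Real.log t) := by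
  ext u
  constructor
  · rintro ⟨s, ⟨hs1, hst⟩, rfl⟩
    exact ⟨Real.log_pos hs1, Real.log_lt_log (by linarith) hst⟩
  · rintro ⟨hu0, hut⟩
    refine ⟨Real.exp u, ⟨?_, ?_⟩, Real.log_exp u⟩
    · calc (1:ℝ) = Real.exp 0 := Real.exp_zero.symm
        _ < Real.exp u := Real.exp_lt_exp.mpr hu0
    · calc Real.exp u < Real.exp (Real.log t) := Real.exp_lt_exp.mpr hut
        _ = t := Real.exp_log (by linarith)

lemma log_deriv_in (t : ℝ) : ∀ s ∈ Ioo (1:ℝ) t,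
    HasDerivWithinAt Real.log s⁻¹ (Ioo (1:ℝ) t) s := fun s hs =>
  (Real.hasDerivAt_log (by linarith [hs.1] : s ≠ 0)).hasDerivWithinAt

lemma log_injOn (t : ℝ) : InjOn Real.log (Ioo (1:ℝ) t) :=
  Real.log_injOn_pos.mono (fun s hs => by simp only [mem_Ioi]; linarith [hs.1])

lemma logCOV (t : ℝ) (ht : 1 < t) (g : ℝ → ℝ) :
    ∫ u in Ioo (0:ℝ) (Real.log t), g u
      = ∫ s in Ioo (1:ℝ) t, g (Real.log s) / s := by
  rw [← log_image t ht,
    integral_image_eq_integral_abs_deriv_smul measurableSet_Ioo (log_deriv_in t) (log_injOn t) g]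
  refine setIntegral_congr_fun measurableSet_Ioo fun s hs => ?_
  rw [abs_of_pos (inv_pos.mpr (by linarith [hs.1])), smul_eq_mul]
  ring

lemma logIntegrable (t : ℝ) (ht : 1 < t) (g : ℝ → ℝ)
    (hg : IntegrableOn g (Ioo (0:ℝ) (Real.log t))) :
    IntegrableOn (fun s => g (Real.log s) / s) (Ioo (1:ℝ) t) := by
  rw [← log_image t ht] at hg
  have := (integrableOn_image_iff_integrableOn_abs_deriv_smul measurableSet_Ioo
    (log_deriv_in t) (log_injOn t) g).mp hg
  refine this.congr_fun (fun s hs => ?_) measurableSet_Ioo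
  beta_reduce
  rw [abs_of_pos (inv_pos.mpr (by linarith [hs.1] : (0:ℝ) < s)), smul_eq_mul]
  ring


lemma G_integrable (a β L : ℝ) (ha : 0 < a) (hβ : 0 ≤ β) :
    IntervalIntegrable (fun u => (L - u) ^ (a-1) * u ^ β) volume 0 L := by
  have h1 : IntervalIntegrable (fun u : ℝ => u ^ (a-1)) volume 0 L :=
    intervalIntegrable_rpow' (by linarith)
  have h2 := h1.comp_sub_left L
  rw [sub_zero, sub_self] at h2
  exact (h2.symm).mul_continuousOn (Real.continuous_rpow_const hβ).continuousOn

lemma eqOn_log (α β t : ℝ) (ht : 1 < t) : ∀ s ∈ Ioo (1:ℝ) t,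
    Real.log (t/s) ^ (α-1) * Real.log s ^ β / s
      = (fun u => (Real.log t - u) ^ (α-1) * u ^ β) (Real.log s) / s := fun s hs => by
  rw [Real.log_div (by linarith : t ≠ 0) (by linarith [hs.1] : s ≠ 0)]

lemma main_integrable (α β t : ℝ) (hα : 0 < α) (hβ : 0 ≤ β) (ht : 1 < t) :
    IntervalIntegrable (fun s => Real.log (t/s) ^ (α-1) * Real.log s ^ β / s) volume 1 t := by
  have hL : 0 < Real.log t := Real.log_pos ht
  have hG : IntegrableOn (fun u => (Real.log t - u) ^ (α-1) * u ^ β)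
      (Ioo 0 (Real.log t)) := by
    have := G_integrable α β (Real.log t) hα hβ
    rw [intervalIntegrable_iff_integrableOn_Ioo_of_le hL.le] at this
    exact this
  have h2 := logIntegrable t ht _ hG
  rw [intervalIntegrable_iff_integrableOn_Ioo_of_le (by linarith : (1:ℝ) ≤ t)]
  exact h2.congr_fun (fun s hs => (eqOn_log α β t ht s hs).symm) measurableSet_Ioo

lemma key (α β t : ℝ) (hα : 0 < α) (hβ : 0 ≤ β) (ht : 1 < t) :
    ∫ s in (1:ℝ)..t, Real.log (t/s) ^ (α-1) * Real.log s ^ β / s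
      = Gamma α * Gamma (β+1) / Gamma (α+β+1) * Real.log t ^ (α+β) := by
  have hL : 0 < Real.log t := Real.log_pos ht
  rw [intervalIntegral.integral_of_le ht.le, MeasureTheory.integral_Ioc_eq_integral_Ioo,
    setIntegral_congr_fun measurableSet_Ioo (eqOn_log α β t ht),
    ← logCOV t ht (fun u => (Real.log t - u) ^ (α-1) * u ^ β),
    ← MeasureTheory.integral_Ioc_eq_integral_Ioo,
    ← intervalIntegral.integral_of_le hL.le]
  have := scaledBeta α (β+1) (Real.log t) hα (by linarith) hL
  rw [show β+1-1 = β by ring, show α+(β+1) = α+β+1 by ring,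
    show α+β+1-1 = α+β by ring] at this
  exact this

end Aux

theorem stmt_6 (n : ℕ) (T α θ : ℝ) (hT : 1 < T) (hα : 0 < α) (hθ : 0 < θ)
    (I : C(Icc (1:ℝ) T, EuclideanSpace ℝ (Fin n)) → C(Icc (1:ℝ) T, EuclideanSpace ℝ (Fin n)))
    (h : ∀ x y : C(Icc (1:ℝ) T, EuclideanSpace ℝ (Fin n)), ∀ t : Icc (1:ℝ) T,
      ‖I x t - I y t‖ ≤ (θ / Real.Gamma α) * ∫ s in (1:ℝ)..(t:ℝ),
        (Real.log ((t:ℝ) / s)) ^ (α - 1)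
          * ‖x (Set.projIcc 1 T hT.le s) - y (Set.projIcc 1 T hT.le s)‖ / s) :
    ∀ j : ℕ, ∀ x y : C(Icc (1:ℝ) T, EuclideanSpace ℝ (Fin n)), ∀ t : Icc (1:ℝ) T,
      ‖(I^[j]) x t - (I^[j]) y t‖
        ≤ (θ * (Real.log (t:ℝ)) ^ α) ^ j / Real.Gamma (j * α + 1) * ‖x - y‖ := by
  have hΓα : 0 < Gamma α := Real.Gamma_pos_of_pos hα
  intro j
  induction j with
  | zero =>
    intro x y t
    simp only [Function.iterate_zero, id_eq, pow_zero, Nat.cast_zero, zero_mul, zero_add,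
      Real.Gamma_one, one_div]
    rw [inv_one, one_mul]
    calc ‖x t - y t‖ = ‖(x - y) t‖ := by rw [ContinuousMap.sub_apply]
      _ ≤ ‖x - y‖ := ContinuousMap.norm_coe_le_norm (x - y) t
  | succ j ih =>
    intro x y t
    have hΓj : 0 < Gamma ((j:ℝ) * α + 1) := Real.Gamma_pos_of_pos (by positivity)
    have step1 := h (I^[j] x) (I^[j] y) t
    rw [← Function.iterate_succ_apply' I j x, ← Function.iterate_succ_apply' I j y] at step1
    rcases eq_or_lt_of_le t.2.1 with h1 | h1
    · -- t = 1
      rw [← h1] at step1 ⊢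
      rw [intervalIntegral.integral_same, mul_zero] at step1
      refine step1.trans ?_
      rw [Real.log_one, Real.zero_rpow hα.ne', mul_zero, zero_pow (Nat.succ_ne_zero j),
        zero_div, zero_mul]
    · -- 1 < t
      set tv : ℝ := (t : ℝ) with htv
      have hL : 0 < Real.log tv := Real.log_pos h1
      set C : ℝ := θ ^ j / Gamma ((j:ℝ) * α + 1) * ‖x - y‖ with hC
      have hC0 : 0 ≤ C := by positivity
      -- pointwise bound on [1, tv]
      have hle : ∀ s ∈ Icc (1:ℝ) tv,
          Real.log (tv/s) ^ (α-1)
              * ‖(I^[j] x) (Set.projIcc 1 T hT.le s) - (I^[j] y) (Set.projIcc 1 T hT.le s)‖ / s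
            ≤ Real.log (tv/s) ^ (α-1) * Real.log s ^ (α*(j:ℝ)) / s * C := by
        intro s hs
        have hs1 : (1:ℝ) ≤ s := hs.1
        have hsT : s ≤ T := le_trans hs.2 (le_trans t.2.2 le_rfl)
        have hsmem : s ∈ Icc (1:ℝ) T := ⟨hs1, hsT⟩
        have hproj : Set.projIcc 1 T hT.le s = ⟨s, hsmem⟩ := Set.projIcc_of_mem hT.le hsmem
        have hN := ih x y ⟨s, hsmem⟩
        have hls : 0 ≤ Real.log s := Real.log_nonneg hs1
        have hpow : (θ * Real.log s ^ α) ^ j = θ ^ j * Real.log s ^ (α*(j:ℝ)) := by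
          rw [mul_pow, Real.rpow_mul hls, Real.rpow_natCast]
        have hN' : ‖(I^[j] x) (Set.projIcc 1 T hT.le s) - (I^[j] y) (Set.projIcc 1 T hT.le s)‖
            ≤ Real.log s ^ (α*(j:ℝ)) * C := by
          rw [hproj]
          refine hN.trans (le_of_eq ?_)
          rw [hC, hpow]; ring
        have hA : 0 ≤ Real.log (tv/s) ^ (α-1) / s :=
          div_nonneg (Real.rpow_nonneg (Real.log_nonneg
            ((one_le_div (by linarith)).mpr hs.2)) _) (by linarith)
        calc Real.log (tv/s) ^ (α-1) * ‖_ - _‖ / s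
            = (Real.log (tv/s) ^ (α-1) / s) * ‖(I^[j] x) (Set.projIcc 1 T hT.le s)
                - (I^[j] y) (Set.projIcc 1 T hT.le s)‖ := by ring
          _ ≤ (Real.log (tv/s) ^ (α-1) / s) * (Real.log s ^ (α*(j:ℝ)) * C) :=
              mul_le_mul_of_nonneg_left hN' hA
          _ = Real.log (tv/s) ^ (α-1) * Real.log s ^ (α*(j:ℝ)) / s * C := by ring
      -- integrability of both sides
      have hcont : Continuous fun s : ℝ =>
          ‖(I^[j] x) (Set.projIcc 1 T hT.le s) - (I^[j] y) (Set.projIcc 1 T hT.le s)‖ :=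
        (((I^[j] x).continuous.comp (continuous_projIcc)).sub
          ((I^[j] y).continuous.comp (continuous_projIcc))).norm
      have hintf : IntervalIntegrable (fun s => Real.log (tv/s) ^ (α-1)
          * ‖(I^[j] x) (Set.projIcc 1 T hT.le s) - (I^[j] y) (Set.projIcc 1 T hT.le s)‖ / s)
          volume 1 tv := by
        have h0 := (main_integrable α 0 tv hα le_rfl h1).mul_continuousOn
          (g := fun s => ‖(I^[j] x) (Set.projIcc 1 T hT.le s)
            - (I^[j] y) (Set.projIcc 1 T hT.le s)‖) hcont.continuousOn
        have : (fun s => Real.log (tv/s) ^ (α-1) * Real.log s ^ (0:ℝ) / s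
            * ‖(I^[j] x) (Set.projIcc 1 T hT.le s) - (I^[j] y) (Set.projIcc 1 T hT.le s)‖)
            = fun s => Real.log (tv/s) ^ (α-1)
              * ‖(I^[j] x) (Set.projIcc 1 T hT.le s) - (I^[j] y) (Set.projIcc 1 T hT.le s)‖ / s := by
          funext s; rw [Real.rpow_zero]; ring
        rwa [this] at h0
      have hintg : IntervalIntegrable
          (fun s => Real.log (tv/s) ^ (α-1) * Real.log s ^ (α*(j:ℝ)) / s * C) volume 1 tv :=
        (main_integrable α (α*(j:ℝ)) tv hα (by positivity) h1).mul_const C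
      have step2 := intervalIntegral.integral_mono_on (le_of_lt h1) hintf hintg hle
      rw [intervalIntegral.integral_mul_const, key α (α*(j:ℝ)) tv hα (by positivity) h1] at step2
      have step3 : ‖(I^[j+1]) x t - (I^[j+1]) y t‖
          ≤ (θ / Gamma α) * (Gamma α * Gamma (α*(j:ℝ)+1) / Gamma (α+α*(j:ℝ)+1)
              * Real.log tv ^ (α+α*(j:ℝ)) * C) :=
        step1.trans (mul_le_mul_of_nonneg_left step2 (by positivity))
      refine step3.trans (le_of_eq ?_)
      have hΓrw : Gamma (α*(j:ℝ)+1) = Gamma ((j:ℝ)*α+1) := by rw [mul_comm]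
      have hΓrw2 : Gamma (α+α*(j:ℝ)+1) = Gamma (((j:ℕ)+1:ℝ)*α+1) := by ring_nf
      have hexp : Real.log tv ^ (α+α*(j:ℝ)) = (Real.log tv ^ α) ^ (j+1 : ℕ) := by
        rw [← Real.rpow_natCast (Real.log tv ^ α) (j+1), ← Real.rpow_mul hL.le]
        push_cast; ring_nf
      rw [hΓrw, hΓrw2, hexp, hC]
      push_cast
      rw [mul_pow]
      field_simp
      ring
end
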